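/- Suppose there exists an oriented graph with no Seymour vertex. Then for every function d : ℕ → ℝ with d(n) → ∞ as n → ∞, there exist infinitely many n ∈ ℕ for which there exists an n-vertex strongly-connected oriented graph D with δ⁺(D) < d(n) that contains no Seymour vertex. -/

import Mathlib

open Filter

/-- The outneighbourhood `N1(v)` of `v` in the digraph with arc relation `D`. -/
def outNbr {V : Type*} (D : V → V → Prop) (v : V) : Set V := {w | w ≠ v ∧ D v w}

/-- The inneighbourhood `N⁻(v)` of `v`. -/
def inNbr {V : Type*} (D : V → V → Prop) (v : V) : Set V := {w | w ≠ v ∧ D w v}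

/-- The second outneighbourhood `N2(v)` of `v`. -/
def outNbr2 {V : Type*} (D : V → V → Prop) (v : V) : Set V :=
  {w | w ∉ insert v (outNbr D v) ∧ ∃ u ∈ outNbr D v, D u w}

/-- `v` is a Seymour vertex: `|N2(v)| ≥ |N1(v)|`. -/
def SeymourVertex {V : Type*} (D : V → V → Prop) (v : V) : Prop :=
  (outNbr D v).ncard ≤ (outNbr2 D v).ncard

/-- `v` is a Sullivan vertex: `|N2(v)| ≥ |N⁻(v)|`. -/
def SullivanVertex {V : Type*} (D : V → V → Prop) (v : V) : Prop :=
  (inNbr D v).ncard ≤ (outNbr2 D v).ncard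

/-- An oriented graph: an asymmetric (hence irreflexive and loopless) arc relation. -/
def OrientedGraph {V : Type*} (D : V → V → Prop) : Prop := ∀ u v, D u v → ¬ D v u

/-- `D` is an orientation of the simple graph `G`. -/
def Orients {V : Type*} (D : V → V → Prop) (G : SimpleGraph V) : Prop :=
  OrientedGraph D ∧ ∀ u v, G.Adj u v ↔ (D u v ∨ D v u)

/-- Strong connectivity of a digraph: every vertex reaches every other by a directed path. -/
def StrongConn {V : Type*} (D : V → V → Prop) : Prop := ∀ u v, Relation.ReflTransGen D u v

/-- The number of edges of `G` with one endpoint in `A` and the other in `B`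
(counted via ordered pairs; equals `e(A,B)` for disjoint `A`, `B`). -/
noncomputable def eBtw {V : Type*} (G : SimpleGraph V) (A B : Set V) : ℕ :=
  {p : V × V | p.1 ∈ A ∧ p.2 ∈ B ∧ G.Adj p.1 p.2}.ncard

/-- The number of edges of `G` with both endpoints in `A`. -/
noncomputable def eIn {V : Type*} (G : SimpleGraph V) (A : Set V) : ℕ :=
  {e | e ∈ G.edgeSet ∧ ∀ v ∈ e, v ∈ A}.ncard

open scoped Classical in
/-- The probability that the binomial random graph `G(n,p)` satisfies the property `P`. -/
noncomputable def gnpProb (n : ℕ) (p : ℝ) (P : SimpleGraph (Fin n) → Prop) : ℝ :=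
  ∑ G : SimpleGraph (Fin n),
    if P G then p ^ G.edgeSet.ncard * (1 - p) ^ (n.choose 2 - G.edgeSet.ncard) else 0

section EquivTransport

variable {α β : Type*}

lemma outNbr_equiv (e : α ≃ β) (D : α → α → Prop) (b : β) :
    outNbr (fun x y => D (e.symm x) (e.symm y)) b = e '' outNbr D (e.symm b) := by
  ext w
  simp only [outNbr, Set.mem_setOf_eq, Set.mem_image]
  constructor
  · rintro ⟨hne, hD⟩
    exact ⟨e.symm w, ⟨fun h => hne (by simpa using congrArg e h), hD⟩, by simp⟩
  · rintro ⟨x, ⟨hne, hD⟩, rfl⟩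
    exact ⟨fun h => hne (by simpa using congrArg e.symm h), by simpa using hD⟩

lemma outNbr2_equiv (e : α ≃ β) (D : α → α → Prop) (b : β) :
    outNbr2 (fun x y => D (e.symm x) (e.symm y)) b = e '' outNbr2 D (e.symm b) := by
  ext w
  simp only [outNbr2, Set.mem_setOf_eq, Set.mem_image, outNbr_equiv e D b,
    Set.mem_insert_iff]
  constructor
  · rintro ⟨hnot, u, hu, hD⟩
    obtain ⟨x, hx, rfl⟩ := hu
    refine ⟨e.symm w, ⟨?_, x, hx, by simpa using hD⟩, by simp⟩
    intro hmem
    rcases Set.mem_insert_iff.mp hmem with h | h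
    · exact hnot (Or.inl (by simpa using congrArg e h))
    · exact hnot (Or.inr ⟨e.symm w, h, by simp⟩)
  · rintro ⟨x, ⟨hnot, u, hu, hD⟩, rfl⟩
    constructor
    · rintro (h | h)
      · exact hnot (Or.inl (by simpa using congrArg e.symm h))
      · obtain ⟨y, hy, hyx⟩ := h
        exact hnot (Or.inr (e.injective hyx ▸ hy))
    · exact ⟨e u, Set.mem_image_of_mem _ hu, by simpa using hD⟩

lemma seymour_equiv (e : α ≃ β) (D : α → α → Prop) (b : β) :
    SeymourVertex (fun x y => D (e.symm x) (e.symm y)) b ↔ SeymourVertex D (e.symm b) := by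
  unfold SeymourVertex
  rw [outNbr_equiv, outNbr2_equiv, Set.ncard_image_of_injective _ e.injective,
    Set.ncard_image_of_injective _ e.injective]

end EquivTransport

section construction

variable {m k : ℕ} (D₀ : Fin m → Fin m → Prop)

/-- The cyclic blow-up construction. -/
def cyc (D₀ : Fin m → Fin m → Prop) (p q : Fin m × ZMod k) : Prop :=
  (q.2 = p.2 ∧ D₀ p.1 q.1) ∨ q.2 = p.2 + 1

theorem cyc_works (hk : 3 ≤ k) (hori : OrientedGraph D₀)
    (hsey : ∀ v, ¬ SeymourVertex D₀ v) :
    OrientedGraph (cyc (k := k) D₀) ∧ StrongConn (cyc (k := k) D₀) ∧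
    (∀ p : Fin m × ZMod k, (outNbr (cyc (k := k) D₀) p).ncard = (outNbr D₀ p.1).ncard + m) ∧
    (∀ p, ¬ SeymourVertex (cyc (k := k) D₀) p) := by
  haveI : NeZero k := ⟨by omega⟩
  set D := cyc (k := k) D₀ with hD
  have h1 : (1 : ZMod k) ≠ 0 := by
    intro h
    rw [show ((1:ZMod k) = ((1:ℕ) : ZMod k)) by push_cast; ring] at h
    have := Nat.le_of_dvd (by norm_num) ((ZMod.natCast_eq_zero_iff 1 k).mp h)
    omega
  have h2 : (2 : ZMod k) ≠ 0 := by
    intro h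
    rw [show ((2:ZMod k) = ((2:ℕ) : ZMod k)) by push_cast; ring] at h
    have := Nat.le_of_dvd (by norm_num) ((ZMod.natCast_eq_zero_iff 2 k).mp h)
    omega
  have hii1 : ∀ i : ZMod k, i + 1 ≠ i := fun i h => h1 (by linear_combination h)
  have hii2 : ∀ i : ZMod k, i + 2 ≠ i := fun i h => h2 (by linear_combination h)
  have hi12 : ∀ i : ZMod k, i + 2 ≠ i + 1 := fun i h => h1 (by linear_combination h)
  have hne0 : ∀ v w, D₀ v w → w ≠ v := fun v w h hh => hori v w h (hh ▸ h)
  have hinj : ∀ j : ZMod k, Function.Injective (fun w : Fin m => (w, j)) :=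
    fun j a b h => (Prod.ext_iff.mp h).1
  -- characterization of out-neighbourhoods
  have houtN : ∀ (v : Fin m) (i : ZMod k), outNbr D (v, i) =
      ((fun w => (w, i)) '' outNbr D₀ v) ∪ ((fun w => (w, i+1)) '' Set.univ) := by
    intro v i
    ext ⟨w, j⟩
    simp only [outNbr, Set.mem_setOf_eq, Set.mem_union, Set.mem_image, Set.mem_univ,
      true_and]
    constructor
    · rintro ⟨hne, (⟨hj, hDvw⟩ | hj)⟩
      · subst hj; exact Or.inl ⟨w, ⟨hne0 v w hDvw, hDvw⟩, rfl⟩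
      · subst hj; exact Or.inr ⟨w, rfl⟩
    · rintro (⟨x, ⟨hxv, hDvx⟩, hxe⟩ | ⟨x, hxe⟩)
      · obtain ⟨rfl, rfl⟩ := Prod.ext_iff.mp hxe
        exact ⟨fun h => hxv (Prod.ext_iff.mp h).1, Or.inl ⟨rfl, hDvx⟩⟩
      · obtain ⟨rfl, rfl⟩ := Prod.ext_iff.mp hxe
        exact ⟨fun h => hii1 i (Prod.ext_iff.mp h).2, Or.inr rfl⟩
  have hout2 : ∀ (v : Fin m) (i : ZMod k), outNbr2 D (v, i) =
      ((fun w => (w, i)) '' outNbr2 D₀ v) ∪ ((fun w => (w, i+2)) '' Set.univ) := by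
    intro v i
    ext ⟨w, j⟩
    simp only [outNbr2, Set.mem_setOf_eq, Set.mem_union, Set.mem_image, Set.mem_univ,
      true_and]
    constructor
    · rintro ⟨hnot, ⟨u, l⟩, ⟨hne_ul, hD_ul⟩, harc⟩
      have hnot1 : ¬ ((w,j) = ((v,i) : Fin m × ZMod k)) := fun h => hnot (h ▸ Set.mem_insert _ _)
      have hnot2 : ¬ D (v,i) (w,j) := fun h => hnot (Set.mem_insert_of_mem _ ⟨hnot1, h⟩)
      rcases hD_ul with ⟨hl, hDvu⟩ | hl
      · subst hl
        rcases harc with ⟨hj, hDuw⟩ | hj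
        · subst hj
          left
          refine ⟨w, ⟨?_, u, ⟨hne0 v u hDvu, hDvu⟩, hDuw⟩, rfl⟩
          intro hmem
          rcases Set.mem_insert_iff.mp hmem with h | h
          · exact hnot1 (by rw [h])
          · exact hnot2 (Or.inl ⟨rfl, h.2⟩)
        · subst hj; exact absurd (Or.inr rfl) hnot2
      · subst hl
        rcases harc with ⟨hj, hDuw⟩ | hj
        · subst hj; exact absurd (Or.inr rfl) hnot2
        · subst hj
          right
          exact ⟨w, Prod.ext rfl (by ring)⟩
    · rintro (⟨x, ⟨hxnot, u, hu, hDux⟩, hxe⟩ | ⟨x, hxe⟩)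
      · obtain ⟨rfl, rfl⟩ := Prod.ext_iff.mp hxe
        refine ⟨?_, (u, i), ⟨fun h => hu.1 (Prod.ext_iff.mp h).1, Or.inl ⟨rfl, hu.2⟩⟩,
          Or.inl ⟨rfl, hDux⟩⟩
        intro hmem
        rcases Set.mem_insert_iff.mp hmem with h | h
        · exact hxnot (Set.mem_insert_iff.mpr (Or.inl (Prod.ext_iff.mp h).1))
        · rcases h.2 with ⟨-, hDvx⟩ | habs
          · exact hxnot (Set.mem_insert_iff.mpr (Or.inr ⟨hne0 v x hDvx, hDvx⟩))
          · exact hii1 i habs.symm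
      · obtain ⟨rfl, rfl⟩ := Prod.ext_iff.mp hxe
        refine ⟨?_, (v, i+1), ⟨fun h => hii1 i (Prod.ext_iff.mp h).2, Or.inr rfl⟩,
          Or.inr (by ring)⟩
        intro hmem
        rcases Set.mem_insert_iff.mp hmem with h | h
        · exact hii2 i (Prod.ext_iff.mp h).2
        · rcases h.2 with ⟨habs, -⟩ | habs
          · exact hii2 i habs
          · exact hi12 i habs
  have hm_univ : ∀ j : ZMod k, ((fun w : Fin m => (w, j)) '' Set.univ).ncard = m := by
    intro j
    rw [Set.ncard_image_of_injective _ (hinj j), Set.ncard_univ]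
    simp
  have hcard1 : ∀ (v : Fin m) (i : ZMod k),
      (outNbr D (v,i)).ncard = (outNbr D₀ v).ncard + m := by
    intro v i
    rw [houtN v i, Set.ncard_union_eq ?_ (Set.toFinite _) (Set.toFinite _),
      Set.ncard_image_of_injective _ (hinj i), hm_univ]
    rw [Set.disjoint_left]
    rintro ⟨w, j⟩ ⟨x, -, hxe⟩ ⟨y, -, hye⟩
    obtain ⟨-, rfl⟩ := Prod.ext_iff.mp hxe
    exact hii1 i (Prod.ext_iff.mp hye).2
  have hcard2 : ∀ (v : Fin m) (i : ZMod k),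
      (outNbr2 D (v,i)).ncard = (outNbr2 D₀ v).ncard + m := by
    intro v i
    rw [hout2 v i, Set.ncard_union_eq ?_ (Set.toFinite _) (Set.toFinite _),
      Set.ncard_image_of_injective _ (hinj i), hm_univ]
    rw [Set.disjoint_left]
    rintro ⟨w, j⟩ ⟨x, -, hxe⟩ ⟨y, -, hye⟩
    obtain ⟨-, rfl⟩ := Prod.ext_iff.mp hxe
    exact hii2 i (Prod.ext_iff.mp hye).2
  refine ⟨?_, ?_, fun p => hcard1 p.1 p.2, ?_⟩
  · rintro ⟨v, i⟩ ⟨w, j⟩ h h'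
    rcases h with ⟨hj, hvw⟩ | hj <;> rcases h' with ⟨hi, hwv⟩ | hi
    · exact hori v w hvw hwv
    · subst hj; exact hii1 j hi.symm
    · subst hi; exact hii1 i hj.symm
    · subst hj; exact hii2 i (by linear_combination hi.symm)
  · -- strong connectivity
    have hreach : ∀ (v : Fin m) (i : ZMod k) (c : ℕ) (w : Fin m),
        Relation.ReflTransGen D (v, i) (w, i + (c : ZMod k) + 1) := by
      intro v i c
      induction c with
      | zero =>
        intro w
        refine Relation.ReflTransGen.single ?_
        right
        push_cast
        ring
      | succ c ih =>
        intro w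
        refine (ih v).tail ?_
        right
        push_cast
        ring
    rintro ⟨v, i⟩ ⟨w, j⟩
    by_cases ht : (j - i).val = 0
    · have hji : j = i := sub_eq_zero.mp ((ZMod.val_eq_zero _).mp ht)
      have hkey : i + ((k - 1 : ℕ) : ZMod k) + 1 = j := by
        have hc : ((k - 1 : ℕ) : ZMod k) + 1 = ((k - 1 + 1 : ℕ) : ZMod k) := by
          push_cast; ring
        rw [add_assoc, hc, show k - 1 + 1 = k from by omega, ZMod.natCast_self, add_zero, hji]
      have := hreach v i (k - 1) w
      rwa [hkey] at this
    · have hkey : i + (((j - i).val - 1 : ℕ) : ZMod k) + 1 = j := by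
        have hc : (((j - i).val - 1 : ℕ) : ZMod k) + 1
            = (((j - i).val - 1 + 1 : ℕ) : ZMod k) := by push_cast; ring
        rw [add_assoc, hc, show (j - i).val - 1 + 1 = (j - i).val from by omega,
          show (((j - i).val : ℕ) : ZMod k) = j - i from ZMod.natCast_rightInverse _]
        ring
      have := hreach v i ((j - i).val - 1) w
      rwa [hkey] at this
  · rintro ⟨v, i⟩ hsv
    apply hsey v
    unfold SeymourVertex at hsv ⊢
    rw [hcard1 v i, hcard2 v i] at hsv
    omega

end construction

/-- if some (nonempty) oriented graph has no Seymour vertex, then for every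
function `d(n) → ∞` there are infinitely many `n` admitting an `n`-vertex
strongly-connected oriented graph with minimum outdegree `< d(n)` and no Seymour vertex. -/
theorem stmt_4
    (hcounter : ∃ (m : ℕ) (D₀ : Fin m → Fin m → Prop),
      0 < m ∧ OrientedGraph D₀ ∧ ∀ v, ¬ SeymourVertex D₀ v)
    (d : ℕ → ℝ) (hd : Tendsto d atTop atTop) :
    ∀ N : ℕ, ∃ n, N ≤ n ∧ ∃ D : Fin n → Fin n → Prop,
      OrientedGraph D ∧ StrongConn D ∧
      (∃ v, ((outNbr D v).ncard : ℝ) < d n) ∧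
      ∀ v, ¬ SeymourVertex D v := by
  obtain ⟨m, D₀, hm, hori, hsey⟩ := hcounter
  intro N
  obtain ⟨K, hK⟩ := Filter.eventually_atTop.mp (hd.eventually_gt_atTop (2 * m : ℝ))
  set k := max 3 (max N K) with hkdef
  have hk3 : 3 ≤ k := le_max_left _ _
  haveI : NeZero k := ⟨by omega⟩
  have hkN : N ≤ k := le_trans (le_max_left N K) (le_max_right _ _)
  have hkK : K ≤ k := le_trans (le_max_right N K) (le_max_right _ _)
  refine ⟨m * k, le_trans hkN (Nat.le_mul_of_pos_left k hm), ?_⟩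
  obtain ⟨horiD, hstrong, hcard, hnosey⟩ := cyc_works D₀ hk3 hori hsey
  have hcardV : Fintype.card (Fin m × ZMod k) = m * k := by simp [ZMod.card]
  let e : (Fin m × ZMod k) ≃ Fin (m * k) := Fintype.equivFinOfCardEq hcardV
  refine ⟨fun x y => cyc D₀ (e.symm x) (e.symm y), fun u v h h' => horiD _ _ h h', ?_, ?_, ?_⟩
  · intro a b
    have h := hstrong (e.symm a) (e.symm b)
    have h2 : Relation.ReflTransGen (fun x y => cyc D₀ (e.symm x) (e.symm y))
        (e (e.symm a)) (e (e.symm b)) :=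
      h.lift e (fun x y hxy => by simpa [Function.onFun] using hxy)
    simpa using h2
  · refine ⟨e (⟨0, hm⟩, 0), ?_⟩
    rw [outNbr_equiv, Set.ncard_image_of_injective _ e.injective, Equiv.symm_apply_apply,
      hcard (⟨0, hm⟩, 0)]
    have hle : (outNbr D₀ ⟨0, hm⟩).ncard ≤ m := by
      have h3 := Set.ncard_le_ncard (Set.subset_univ (outNbr D₀ ⟨0, hm⟩)) (Set.toFinite _)
      simpa [Set.ncard_univ] using h3
    have hdn : (2 * m : ℝ) < d (m * k) :=
      hK _ (le_trans hkK (Nat.le_mul_of_pos_left k hm))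
    have hnat : (outNbr D₀ (⟨0, hm⟩ : Fin m)).ncard + m ≤ 2 * m := by omega
    calc (((outNbr D₀ (⟨0, hm⟩ : Fin m)).ncard + m : ℕ) : ℝ) ≤ ((2 * m : ℕ) : ℝ) := by
          exact_mod_cast hnat
      _ = (2 * m : ℝ) := by push_cast; ring
      _ < d (m * k) := hdn
  · intro b hb
    exact hnosey _ ((seymour_equiv e (cyc D₀) b).mp hb)
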